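/- If m is a log-concave measure on ℝⁿ (i.e. dm = e^{−W} dx with W : ℝⁿ → ℝ ∪ {+∞} convex), then for any measurable functions f₀, f₁ : ℝⁿ → ℝ ∪ {+∞} and any t ∈ [0,1], it holds that ∫ e^{−((1−t)f₀ + t f₁)*} dm ≥ (∫ e^{−f₀*} dm)^{1−t} (∫ e^{−f₁*} dm)^{t}, where g*(y) = sup_{x∈ℝⁿ} {x·y − g(x)} denotes the Fenchel–Legendre transform. -/

import Mathlib

open MeasureTheory Real Filter Set
attribute [local instance] Classical.propDecidable
open scoped ENNReal NNReal Topology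

noncomputable section

/-- `ℝⁿ` as a Euclidean space. -/
abbrev En (n : ℕ) : Type := EuclideanSpace ℝ (Fin n)

/-- `exp(-t)` for an extended real `t`, valued in `ℝ≥0∞`. -/
def expNeg (t : EReal) : ℝ≥0∞ :=
  if t = ⊥ then ⊤ else if t = ⊤ then 0 else ENNReal.ofReal (Real.exp (-t.toReal))

/-- Convexity for `EReal`-valued functions on `ℝⁿ`. -/
def ConvexE {n : ℕ} (f : En n → EReal) : Prop :=
  ∀ x y : En n, ∀ t : ℝ, 0 ≤ t → t ≤ 1 →
    f (t • x + (1 - t) • y) ≤ (t : EReal) * f x + ((1 - t : ℝ) : EReal) * f y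

/-- The class `F(ℝⁿ)`: proper lower semicontinuous convex functions `ℝⁿ → ℝ ∪ {+∞}`. -/
def IsF {n : ℕ} (f : En n → EReal) : Prop :=
  LowerSemicontinuous f ∧ ConvexE f ∧ (∃ x, f x ≠ ⊤) ∧ (∀ x, f x ≠ ⊥)

/-- Fenchel–Legendre transform. -/
def legendre {n : ℕ} (f : En n → EReal) : En n → EReal :=
  fun y => ⨆ x : En n, ((inner ℝ x y : ℝ) : EReal) - f x

/-- `∫ e^{-f} dm`, valued in `ℝ≥0∞`. -/
def intExpNeg {n : ℕ} (m : Measure (En n)) (f : En n → EReal) : ℝ≥0∞ :=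
  ∫⁻ x, expNeg (f x) ∂m

/-- Extended-real logarithm of an `ℝ≥0∞` number. -/
def elog (x : ℝ≥0∞) : EReal :=
  if x = 0 then ⊥ else if x = ⊤ then ⊤ else ((Real.log x.toReal : ℝ) : EReal)

/-- Positive part of an extended real, as an element of `ℝ≥0∞`. -/
def posPart (x : EReal) : ℝ≥0∞ := if x = ⊤ then ⊤ else ENNReal.ofReal x.toReal

/-- Extended-valued integral `∫ f dμ := ∫ f⁺ dμ - ∫ f⁻ dμ`. -/
def eInt {n : ℕ} (μ : Measure (En n)) (f : En n → EReal) : EReal :=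
  ((∫⁻ x, posPart (f x) ∂μ : ℝ≥0∞) : EReal) - ((∫⁻ x, posPart (-f x) ∂μ : ℝ≥0∞) : EReal)

/-- Probability measures with finite first moment. -/
def MemP1 {n : ℕ} (ν : Measure (En n)) : Prop :=
  IsProbabilityMeasure ν ∧ ∫⁻ x, (‖x‖₊ : ℝ≥0∞) ∂ν ≠ ⊤

/-- Probability measures with finite second moment. -/
def MemP2 {n : ℕ} (ν : Measure (En n)) : Prop :=
  IsProbabilityMeasure ν ∧ ∫⁻ x, (‖x‖₊ : ℝ≥0∞) ^ 2 ∂ν ≠ ⊤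

/-- A measure is compactly supported. -/
def HasCompactSupportMeasure {n : ℕ} (ν : Measure (En n)) : Prop :=
  ∃ K : Set (En n), IsCompact K ∧ ν Kᶜ = 0

/-- Coordinate sign flip of a point of `ℝⁿ`. -/
def signFlip {n : ℕ} (ε : Fin n → Bool) (x : En n) : En n :=
  (EuclideanSpace.equiv (Fin n) ℝ).symm (fun i => if ε i then x i else -x i)

/-- Unconditional function. -/
def UncondFun {n : ℕ} (f : En n → EReal) : Prop := ∀ ε x, f (signFlip ε x) = f x

/-- Symmetric function. -/
def SymmFun {n : ℕ} (f : En n → EReal) : Prop := ∀ x, f (-x) = f x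

/-- Unconditional measure. -/
def UncondMeas {n : ℕ} (ν : Measure (En n)) : Prop := ∀ ε, Measure.map (signFlip ε) ν = ν

/-- Symmetric measure. -/
def SymmMeas {n : ℕ} (ν : Measure (En n)) : Prop := Measure.map (fun x => -x) ν = ν

/-- The functional `K(ν|m) = sup { ∫(-f) dν + log ∫ e^{-f*} dm : f ∈ L¹(ν) ∩ F(ℝⁿ) }`. -/
def Kfun {n : ℕ} (ν m : Measure (En n)) : EReal :=
  ⨆ (f : En n → EReal) (_ : IsF f ∧ (∀ᵐ x ∂ν, f x ≠ ⊤) ∧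
      Integrable (fun x => (f x).toReal) ν),
    ((-(∫ x, (f x).toReal ∂ν) : ℝ) : EReal) + elog (intExpNeg m (legendre f))

/-- Maximal correlation transport cost `T(ν₁, ν₂)`. -/
def Tcost {n : ℕ} (ν₁ ν₂ : Measure (En n)) : EReal :=
  ⨅ (f : En n → EReal) (_ : IsF f), eInt ν₁ f + eInt ν₂ (legendre f)

/-- Relative entropy `H(η|m)`, equal to `+∞` when `η` is not absolutely continuous w.r.t. `m`. -/
def relEnt {n : ℕ} (η m : Measure (En n)) : EReal :=
  if η ≪ m then eInt η (fun x => ((Real.log (η.rnDeriv m x).toReal : ℝ) : EReal)) else ⊤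

/-- The standard Gaussian measure on `ℝⁿ`. -/
def stdGaussian (n : ℕ) : Measure (En n) :=
  volume.withDensity fun x =>
    ENNReal.ofReal ((2 * Real.pi) ^ (-(n : ℝ) / 2) * Real.exp (-‖x‖ ^ 2 / 2))

/-- Squared `2`-Wasserstein distance. -/
def W2sq {n : ℕ} (μ ν : Measure (En n)) : ℝ≥0∞ :=
  ⨅ (p : Measure (En n × En n)) (_ : p.map Prod.fst = μ ∧ p.map Prod.snd = ν),
    ∫⁻ q, (‖q.1 - q.2‖₊ : ℝ≥0∞) ^ 2 ∂p

/-- Absolute continuity of `g : ℝ → ℝ` on `[a, b]` (FTC characterization). -/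
def ACOn (g : ℝ → ℝ) (a b : ℝ) : Prop :=
  IntegrableOn (deriv g) (Set.Icc a b) ∧
    ∀ x ∈ Set.Icc a b, g x - g a = ∫ t in a..x, deriv g t

/-- The point of `ℝⁿ` obtained by replacing the `i`-th coordinate of `x` by `t`. -/
def updCoord {n : ℕ} (x : En n) (i : Fin n) (t : ℝ) : En n :=
  (EuclideanSpace.equiv (Fin n) ℝ).symm
    (Function.update ((EuclideanSpace.equiv (Fin n) ℝ) x) i t)

/-- Absolute continuity on almost every line parallel to a coordinate axis. -/
def ACL {n : ℕ} (g : En n → ℝ) : Prop :=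
  ∀ i : Fin n, ∀ᵐ x ∂(volume : Measure (En n)),
    ∀ a b : ℝ, ACOn (fun t => g (updCoord x i t)) a b

/-- Squared norm of the coordinate-wise a.e. gradient, via line derivatives. -/
def gradSq {n : ℕ} (g : En n → ℝ) (x : En n) : ℝ :=
  ∑ i : Fin n, (lineDeriv ℝ g x (EuclideanSpace.single i 1)) ^ 2

/-- Relative Fisher information `I(η|γ) = 4 ∫ |∇ √h|² dγ` where `h = dη/dγ`;
`+∞` unless `√h` is absolutely continuous on almost every line parallel to an axis. -/
def fisherInfo {n : ℕ} (η γ : Measure (En n)) : ℝ≥0∞ :=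
  if η ≪ γ ∧ ACL (fun x => Real.sqrt (η.rnDeriv γ x).toReal) then
    4 * ∫⁻ x, ENNReal.ofReal (gradSq (fun y => Real.sqrt (η.rnDeriv γ y).toReal) x) ∂γ
  else ⊤

/-- Deficit in the Gaussian logarithmic Sobolev inequality. -/
def lsDeficit {n : ℕ} (η : Measure (En n)) : EReal :=
  ((1 / 2 : ℝ) : EReal) * ((fisherInfo η (stdGaussian n) : ℝ≥0∞) : EReal)
    - relEnt η (stdGaussian n)

/-- Moment measure `∇V_# η` of a log-concave measure `η = e^{-V} dx`. -/
def momentMeasure {n : ℕ} (V : En n → EReal) (η : Measure (En n)) : Measure (En n) :=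
  Measure.map (fun x => gradient (fun y => (V y).toReal) x) η

/-- Essential continuity of a convex function. -/
def EssCont {n : ℕ} (V : En n → EReal) : Prop :=
  μH[(n : ℝ) - 1] {x : En n | x ∈ frontier {y | V y ≠ ⊤} ∧ V x ≠ ⊤} = 0

/-- The functional inverse Santaló inequality with constant `c`, restricted to a class `P`. -/
def InvSantaloOn {n : ℕ} (c : ℝ) (P : (En n → EReal) → Prop) : Prop :=
  ∀ f : En n → EReal, IsF f → P f →
    0 < intExpNeg volume f → 0 < intExpNeg volume (legendre f) →
    ENNReal.ofReal c ^ n ≤ intExpNeg volume f * intExpNeg volume (legendre f)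

/-- The functional inverse Santaló inequality `IS_n(c)`. -/
def InvSantalo (n : ℕ) (c : ℝ) : Prop := InvSantaloOn (n := n) c fun _ => True

/-- The symmetric functional inverse Santaló inequality `IS_{n,s}(c)`. -/
def InvSantaloSymm (n : ℕ) (c : ℝ) : Prop := InvSantaloOn (n := n) c SymmFun

/-- The unconditional functional inverse Santaló inequality `IS_{n,u}(c)`. -/
def InvSantaloUncond (n : ℕ) (c : ℝ) : Prop := InvSantaloOn (n := n) c UncondFun

open scoped Pointwise

section PLproof

/-- weighted AM-GM in `ℝ≥0∞`. -/
lemma ennreal_geom_mean {p q : ℝ} (hp : 0 < p) (hq : 0 < q) (hpq : p + q = 1)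
    (a b : ℝ≥0∞) : a ^ p * b ^ q ≤ ENNReal.ofReal p * a + ENNReal.ofReal q * b := by
  rcases eq_or_ne a ⊤ with rfl | ha
  · have : ENNReal.ofReal p * ⊤ = ⊤ := ENNReal.mul_top (by simp [ENNReal.ofReal_eq_zero]; linarith)
    rw [this, top_add]; exact le_top
  rcases eq_or_ne b ⊤ with rfl | hb
  · have : ENNReal.ofReal q * ⊤ = ⊤ := ENNReal.mul_top (by simp [ENNReal.ofReal_eq_zero]; linarith)
    rw [this, add_top]; exact le_top
  lift a to ℝ≥0 using ha
  lift b to ℝ≥0 using hb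
  have key := NNReal.geom_mean_le_arith_mean2_weighted (w₁ := p.toNNReal) (w₂ := q.toNNReal)
    (p₁ := a) (p₂ := b) (by
      have : (p + q).toNNReal = (1:ℝ).toNNReal := by rw [hpq]
      rwa [Real.toNNReal_add hp.le hq.le, Real.toNNReal_one] at this)
  have hcoe : ((p.toNNReal : ℝ)) = p := Real.coe_toNNReal _ hp.le
  have hcoe' : ((q.toNNReal : ℝ)) = q := Real.coe_toNNReal _ hq.le
  calc (a:ℝ≥0∞) ^ p * (b:ℝ≥0∞) ^ q
      = ((a ^ p * b ^ q : ℝ≥0) : ℝ≥0∞) := by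
        rw [ENNReal.coe_mul, ← ENNReal.coe_rpow_of_nonneg _ hp.le,
          ← ENNReal.coe_rpow_of_nonneg _ hq.le]
    _ ≤ ((p.toNNReal * a + q.toNNReal * b : ℝ≥0) : ℝ≥0∞) := by
        rw [ENNReal.coe_le_coe]
        calc a ^ p * b ^ q = a ^ (p.toNNReal:ℝ) * b ^ (q.toNNReal:ℝ) := by rw [hcoe, hcoe']
        _ ≤ _ := key
    _ = ENNReal.ofReal p * a + ENNReal.ofReal q * b := by
        rw [ENNReal.coe_add, ENNReal.coe_mul, ENNReal.coe_mul]; rfl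

lemma exists_slice_Iio {A : Set ℝ} (hA : MeasurableSet A) {r : ℝ≥0∞} (hr : r < volume A) :
    ∃ a ∈ A, r < volume (A ∩ Iio a) := by
  obtain ⟨K, hKA, hK, hrK⟩ := hA.exists_lt_isCompact hr
  have hKne : K.Nonempty := by
    rcases K.eq_empty_or_nonempty with rfl | h
    · simp at hrK
    · exact h
  refine ⟨sSup K, hKA (hK.sSup_mem hKne), ?_⟩
  have h1 : K \ {sSup K} ⊆ A ∩ Iio (sSup K) := by
    rintro x ⟨hxK, hx⟩
    exact ⟨hKA hxK, lt_of_le_of_ne (le_csSup hK.bddAbove hxK) (by simpa using hx)⟩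
  calc r < volume K := hrK
    _ = volume (K \ {sSup K}) := (measure_diff_null Real.volume_singleton).symm
    _ ≤ volume (A ∩ Iio (sSup K)) := measure_mono h1

lemma exists_slice_Ici {B : Set ℝ} (hB : MeasurableSet B) {r : ℝ≥0∞} (hr : r < volume B) :
    ∃ b ∈ B, r < volume (B ∩ Ici b) := by
  obtain ⟨K, hKB, hK, hrK⟩ := hB.exists_lt_isCompact hr
  have hKne : K.Nonempty := by
    rcases K.eq_empty_or_nonempty with rfl | h
    · simp at hrK
    · exact h
  refine ⟨sInf K, hKB (hK.sInf_mem hKne), ?_⟩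
  have h1 : K ⊆ B ∩ Ici (sInf K) := fun x hx => ⟨hKB hx, csInf_le hK.bddBelow hx⟩
  exact hrK.trans_le (measure_mono h1)

/-- volume of scaled set on ℝ -/
lemma vol_smul (r : ℝ) (s : Set ℝ) : volume (r • s) = ENNReal.ofReal |r| * volume s := by
  simpa using Measure.addHaar_smul volume r s

/-- One-dimensional Brunn–Minkowski with weights. -/
lemma bm_one {s : ℝ} (hs0 : 0 < s) (hs1 : s < 1) {A B C : Set ℝ}
    (hA : MeasurableSet A) (hB : MeasurableSet B)
    (hAne : A.Nonempty) (hBne : B.Nonempty)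
    (hsum : ∀ a ∈ A, ∀ b ∈ B, (1 - s) * a + s * b ∈ C) :
    ENNReal.ofReal (1 - s) * volume A + ENNReal.ofReal s * volume B ≤ volume C := by
  -- key pointwise step
  have step : ∀ a ∈ A, ∀ b ∈ B,
      ENNReal.ofReal (1 - s) * volume (A ∩ Iio a) + ENNReal.ofReal s * volume (B ∩ Ici b)
        ≤ volume C := by
    intro a ha b hb
    set z := (1 - s) * a + s * b with hz
    have h1 : ((s * b) +ᵥ ((1 - s) • (A ∩ Iio a))) ⊆ C ∩ Iio z := by
      rintro x ⟨y, ⟨w, ⟨hwA, hwa⟩, rfl⟩, rfl⟩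
      constructor
      · have := hsum w hwA b hb
        simpa [smul_eq_mul, add_comm] using this
      · simp only [smul_eq_mul, vadd_eq_add, mem_Iio, hz]
        have : (1 - s) * w < (1 - s) * a := by
          apply mul_lt_mul_of_pos_left hwa (by linarith)
        linarith
    have h2 : (((1 - s) * a) +ᵥ (s • (B ∩ Ici b))) ⊆ C ∩ Ici z := by
      rintro x ⟨y, ⟨w, ⟨hwB, hwb⟩, rfl⟩, rfl⟩
      constructor
      · exact hsum a ha w hwB
      · simp only [smul_eq_mul, vadd_eq_add, mem_Ici, hz]
        have : s * b ≤ s * w := mul_le_mul_of_nonneg_left hwb hs0.le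
        linarith
    have e1 : ENNReal.ofReal (1 - s) * volume (A ∩ Iio a)
        = volume ((s * b) +ᵥ ((1 - s) • (A ∩ Iio a))) := by
      rw [measure_vadd, vol_smul, abs_of_pos (by linarith)]
    have e2 : ENNReal.ofReal s * volume (B ∩ Ici b)
        = volume (((1 - s) * a) +ᵥ (s • (B ∩ Ici b))) := by
      rw [measure_vadd, vol_smul, abs_of_pos hs0]
    rw [e1, e2]
    calc volume ((s * b) +ᵥ ((1 - s) • (A ∩ Iio a))) + volume (((1 - s) * a) +ᵥ (s • (B ∩ Ici b)))
        ≤ volume (C ∩ Iio z) + volume (C ∩ Ici z) := by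
          exact add_le_add (measure_mono h1) (measure_mono h2)
      _ = volume (C ∩ Iio z) + volume (C \ Iio z) := by
          congr 1; congr 1; ext x; simp [not_lt]
      _ = volume C := measure_inter_add_diff C measurableSet_Iio
  -- suprema
  have hA' : volume A ≤ ⨆ (a : A), volume (A ∩ Iio (a : ℝ)) := by
    refine le_of_forall_lt fun r hr => ?_
    obtain ⟨a, haA, har⟩ := exists_slice_Iio hA hr
    exact har.trans_le (le_iSup (fun (a : A) => volume (A ∩ Iio (a:ℝ))) ⟨a, haA⟩)
  have hB' : volume B ≤ ⨆ (b : B), volume (B ∩ Ici (b : ℝ)) := by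
    refine le_of_forall_lt fun r hr => ?_
    obtain ⟨b, hbB, hbr⟩ := exists_slice_Ici hB hr
    exact hbr.trans_le (le_iSup (fun (b : B) => volume (B ∩ Ici (b:ℝ))) ⟨b, hbB⟩)
  have : Nonempty A := hAne.to_subtype
  have : Nonempty B := hBne.to_subtype
  calc ENNReal.ofReal (1 - s) * volume A + ENNReal.ofReal s * volume B
      ≤ (⨆ (a : A), ENNReal.ofReal (1 - s) * volume (A ∩ Iio (a : ℝ)))
        + (⨆ (b : B), ENNReal.ofReal s * volume (B ∩ Ici (b : ℝ))) := by
        rw [← ENNReal.mul_iSup, ← ENNReal.mul_iSup]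
        exact add_le_add (mul_le_mul_right hA' _) (mul_le_mul_right hB' _)
    _ ≤ volume C := by
        rw [ENNReal.iSup_add]
        refine iSup_le fun a => ?_
        rw [ENNReal.add_iSup]
        exact iSup_le fun b => step a a.2 b b.2

/-- scaling substitution for lintegrals over `Ioi 0`. -/
lemma lintegral_Ioi_scale {k : ℝ} (hk : 0 < k) {φ : ℝ → ℝ≥0∞} (hφ : Measurable φ) :
    ∫⁻ u in Ioi (0:ℝ), φ u = ENNReal.ofReal k * ∫⁻ l in Ioi (0:ℝ), φ (k * l) := by
  have hpre : (fun x : ℝ => k * x) ⁻¹' (Ioi 0) = Ioi (0:ℝ) := by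
    ext x; simp only [mem_preimage, mem_Ioi]; exact mul_pos_iff_of_pos_left hk
  have hmap : Measure.map (fun x : ℝ => k * x) (volume.restrict (Ioi (0:ℝ)))
      = ENNReal.ofReal k⁻¹ • (volume.restrict (Ioi 0)) := by
    conv_lhs => rw [← hpre]
    rw [← Measure.restrict_map (measurable_const_mul k) measurableSet_Ioi,
      Real.map_volume_mul_left (ne_of_gt hk), abs_of_pos (inv_pos.2 hk),
      Measure.restrict_smul]
  have h2 : ∫⁻ l in Ioi (0:ℝ), φ (k * l)
      = ENNReal.ofReal k⁻¹ * ∫⁻ u in Ioi (0:ℝ), φ u := by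
    rw [← lintegral_map hφ (measurable_const_mul k), hmap, lintegral_smul_measure, smul_eq_mul]
  rw [h2, ← mul_assoc, ← ENNReal.ofReal_mul hk.le, mul_inv_cancel₀ (ne_of_gt hk),
    ENNReal.ofReal_one, one_mul]

/-- 1-D Prékopa–Leindler, bounded case. -/
lemma pl_one_bounded {s : ℝ} (hs0 : 0 < s) (hs1 : s < 1) (F G H : ℝ → ℝ≥0∞)
    (hF : Measurable F) (hG : Measurable G) (hH : Measurable H)
    (MF MG : ℝ≥0∞) (hMF : MF ≠ ⊤) (hMG : MG ≠ ⊤)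
    (hFb : ∀ x, F x ≤ MF) (hGb : ∀ y, G y ≤ MG)
    (hyp : ∀ x y, F x ^ (1-s) * G y ^ s ≤ H ((1-s) * x + s * y)) :
    (∫⁻ x, F x) ^ (1-s) * (∫⁻ y, G y) ^ s ≤ ∫⁻ z, H z := by
  have h1s : 0 < 1 - s := by linarith
  by_cases hF0 : ∫⁻ x, F x = 0
  · rw [hF0, ENNReal.zero_rpow_of_pos h1s, zero_mul]; exact zero_le
  by_cases hG0 : ∫⁻ y, G y = 0
  · rw [hG0, ENNReal.zero_rpow_of_pos hs0, mul_zero]; exact zero_le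
  set a := ⨆ x, F x with ha_def
  set b := ⨆ y, G y with hb_def
  have haM : a ≤ MF := iSup_le hFb
  have hbM : b ≤ MG := iSup_le hGb
  have haT : a ≠ ⊤ := fun h => hMF (top_le_iff.1 (h ▸ haM))
  have hbT : b ≠ ⊤ := fun h => hMG (top_le_iff.1 (h ▸ hbM))
  have hFT : ∀ x, F x ≠ ⊤ := fun x h => haT (top_le_iff.1 ((h ▸ le_iSup F x).trans (le_refl a)))
  have hGT : ∀ y, G y ≠ ⊤ := fun y h => hbT (top_le_iff.1 ((h ▸ le_iSup G y).trans (le_refl b)))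
  have ha0 : a ≠ 0 := by
    intro h
    apply hF0
    have : ∀ x, F x = 0 := fun x => le_antisymm (h ▸ le_iSup F x) (zero_le)
    simp [this]
  have hb0 : b ≠ 0 := by
    intro h
    apply hG0
    have : ∀ y, G y = 0 := fun y => le_antisymm (h ▸ le_iSup G y) (zero_le)
    simp [this]
  set c := a ^ (1-s) * b ^ s with hc_def
  have hcT : c ≠ ⊤ := by
    exact ENNReal.mul_ne_top (ENNReal.rpow_ne_top_of_nonneg h1s.le haT)
      (ENNReal.rpow_ne_top_of_nonneg hs0.le hbT)
  have hc0 : c ≠ 0 := by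
    exact mul_ne_zero (ENNReal.rpow_pos (pos_iff_ne_zero.2 ha0) haT).ne'
      (ENNReal.rpow_pos (pos_iff_ne_zero.2 hb0) hbT).ne' 
  set ka := a.toReal with hka_def
  set kb := b.toReal with hkb_def
  set kc := c.toReal with hkc_def
  have hka : 0 < ka := ENNReal.toReal_pos ha0 haT
  have hkb : 0 < kb := ENNReal.toReal_pos hb0 hbT
  have hkc : 0 < kc := ENNReal.toReal_pos hc0 hcT
  have hkc_eq : kc = ka ^ (1-s) * kb ^ s := by
    rw [hkc_def, hc_def, ENNReal.toReal_mul, ← ENNReal.toReal_rpow, ← ENNReal.toReal_rpow]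
  set h := fun z => min (H z) c with hh_def
  have hhm : Measurable h := hH.min measurable_const
  have hhc : ∀ z, h z ≤ c := fun z => min_le_right _ _
  have hhT : ∀ z, h z ≠ ⊤ := fun z h' => hcT (top_le_iff.1 (h' ▸ hhc z))
  -- layer-cake representations
  have layer : ∀ (Φ : ℝ → ℝ≥0∞), Measurable Φ → (∀ x, Φ x ≠ ⊤) → ∀ {k : ℝ}, 0 < k →
      ∫⁻ x, Φ x = ENNReal.ofReal k * ∫⁻ l in Ioi (0:ℝ), volume {x | k * l < (Φ x).toReal} := by
    intro Φ hΦ hΦT k hk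
    have h1 : ∫⁻ x, Φ x = ∫⁻ x, ENNReal.ofReal ((Φ x).toReal) := by
      congr 1; ext x; rw [ENNReal.ofReal_toReal (hΦT x)]
    rw [h1, lintegral_eq_lintegral_meas_lt volume
      (Eventually.of_forall fun x => ENNReal.toReal_nonneg) hΦ.ennreal_toReal.aemeasurable]
    have hmeas : Measurable fun t : ℝ => volume {x | t < (Φ x).toReal} := by
      apply Antitone.measurable
      intro t₁ t₂ hle
      exact measure_mono fun x hx => lt_of_le_of_lt hle hx
    rw [lintegral_Ioi_scale hk hmeas]
  have repF := layer F hF hFT hka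
  have repG := layer G hG hGT hkb
  have reph := layer h hhm hhT hkc
  -- the three level-set families
  set IF := ∫⁻ l in Ioi (0:ℝ), volume {x | ka * l < (F x).toReal} with hIF
  set IG := ∫⁻ l in Ioi (0:ℝ), volume {y | kb * l < (G y).toReal} with hIG
  set IH := ∫⁻ l in Ioi (0:ℝ), volume {z | kc * l < (h z).toReal} with hIH
  -- key claim from BM
  have claim : ∀ l ∈ Ioo (0:ℝ) 1,
      ENNReal.ofReal (1-s) * volume {x | ka * l < (F x).toReal}
        + ENNReal.ofReal s * volume {y | kb * l < (G y).toReal}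
      ≤ volume {z | kc * l < (h z).toReal} := by
    intro l hl
    obtain ⟨hl0, hl1⟩ := hl
    have hAm : MeasurableSet {x | ka * l < (F x).toReal} :=
      measurableSet_lt measurable_const hF.ennreal_toReal
    have hBm : MeasurableSet {y | kb * l < (G y).toReal} :=
      measurableSet_lt measurable_const hG.ennreal_toReal
    have hAne : {x | ka * l < (F x).toReal}.Nonempty := by
      have h1 : ENNReal.ofReal (ka * l) < a := by
        rw [← ENNReal.ofReal_toReal haT]
        exact ENNReal.ofReal_lt_ofReal_iff_of_nonneg (by positivity) |>.2
          (by nlinarith)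
      obtain ⟨x, hx⟩ := lt_iSup_iff.1 h1
      exact ⟨x, (ENNReal.ofReal_lt_iff_lt_toReal (by positivity) (hFT x)).1 hx⟩
    have hBne : {y | kb * l < (G y).toReal}.Nonempty := by
      have h1 : ENNReal.ofReal (kb * l) < b := by
        rw [← ENNReal.ofReal_toReal hbT]
        exact ENNReal.ofReal_lt_ofReal_iff_of_nonneg (by positivity) |>.2
          (by nlinarith)
      obtain ⟨y, hy⟩ := lt_iSup_iff.1 h1
      exact ⟨y, (ENNReal.ofReal_lt_iff_lt_toReal (by positivity) (hGT y)).1 hy⟩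
    apply bm_one hs0 hs1 hAm hBm hAne hBne
    intro x hx y hy
    simp only [mem_setOf_eq] at hx hy ⊢
    have hFx : ENNReal.ofReal (ka * l) < F x :=
      (ENNReal.ofReal_lt_iff_lt_toReal (by positivity) (hFT x)).2 hx
    have hGy : ENNReal.ofReal (kb * l) < G y :=
      (ENNReal.ofReal_lt_iff_lt_toReal (by positivity) (hGT y)).2 hy
    have key : ENNReal.ofReal (kc * l) < h ((1-s) * x + s * y) := by
      have h1 : ENNReal.ofReal (ka * l) ^ (1-s) * ENNReal.ofReal (kb * l) ^ s
          = ENNReal.ofReal (kc * l) := by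
        rw [ENNReal.ofReal_rpow_of_pos (by positivity), ENNReal.ofReal_rpow_of_pos (by positivity),
          ← ENNReal.ofReal_mul (by positivity)]
        congr 1
        rw [Real.mul_rpow hka.le hl0.le, Real.mul_rpow hkb.le hl0.le, hkc_eq]
        have : l ^ (1-s) * l ^ s = l := by
          rw [← Real.rpow_add hl0]; simp
        ring_nf
        nlinarith [this]
      have h2 : ENNReal.ofReal (kc * l) < F x ^ (1-s) * G y ^ s := by
        rw [← h1]
        exact ENNReal.mul_lt_mul (ENNReal.rpow_lt_rpow hFx h1s) (ENNReal.rpow_lt_rpow hGy hs0)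
      have h3 : ENNReal.ofReal (kc * l) < c := by
        rw [← ENNReal.ofReal_toReal hcT]
        exact ENNReal.ofReal_lt_ofReal_iff_of_nonneg (by positivity) |>.2 (by nlinarith)
      exact lt_min (h2.trans_le (hyp x y)) h3
    exact (ENNReal.ofReal_lt_iff_lt_toReal (by positivity) (hhT _)).1 key
  -- vanishing of level sets beyond 1
  have vanF : ∀ l : ℝ, 1 ≤ l → volume {x | ka * l < (F x).toReal} = 0 := by
    intro l hl
    convert measure_empty (μ := (volume : Measure ℝ))
    ext x
    simp only [mem_setOf_eq, mem_empty_iff_false, iff_false, not_lt]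
    calc (F x).toReal ≤ ka := ENNReal.toReal_mono haT (le_iSup F x)
      _ = ka * 1 := (mul_one ka).symm
      _ ≤ ka * l := by nlinarith
  have vanG : ∀ l : ℝ, 1 ≤ l → volume {y | kb * l < (G y).toReal} = 0 := by
    intro l hl
    convert measure_empty (μ := (volume : Measure ℝ))
    ext y
    simp only [mem_setOf_eq, mem_empty_iff_false, iff_false, not_lt]
    calc (G y).toReal ≤ kb := ENNReal.toReal_mono hbT (le_iSup G y)
      _ = kb * 1 := (mul_one kb).symm
      _ ≤ kb * l := by nlinarith
  -- restriction to Ioo 0 1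
  have splitIoi : ∀ (φ : ℝ → ℝ≥0∞), Measurable φ → (∀ l, 1 ≤ l → φ l = 0) →
      ∫⁻ l in Ioi (0:ℝ), φ l = ∫⁻ l in Ioo (0:ℝ) 1, φ l := by
    intro φ hφ hvan
    have hsets : Ioi (0:ℝ) = Ioo (0:ℝ) 1 ∪ Ici (1:ℝ) := by
      ext x
      simp only [mem_Ioi, mem_union, mem_Ioo, mem_Ici]
      constructor
      · intro hx; rcases lt_or_ge x 1 with h | h
        · exact Or.inl ⟨hx, h⟩
        · exact Or.inr h
      · rintro (⟨h, _⟩ | h) <;> linarith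
    rw [hsets, lintegral_union measurableSet_Ici (by
      rw [disjoint_iff_inter_eq_empty]; ext x; simp only [mem_inter_iff, mem_Ioo, mem_Ici,
        mem_empty_iff_false, iff_false]; rintro ⟨⟨_, h1⟩, h2⟩; linarith)]
    have : ∫⁻ l in Ici (1:ℝ), φ l = 0 := by
      rw [← lintegral_zero (μ := volume.restrict (Ici (1:ℝ)))]
      apply setLIntegral_congr_fun measurableSet_Ici
      exact fun l hl => hvan l hl
    rw [this, add_zero]
  have hmeasF : Measurable fun l : ℝ => volume {x | ka * l < (F x).toReal} := by
    apply Antitone.measurable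
    intro t₁ t₂ hle
    exact measure_mono fun x hx => lt_of_le_of_lt (mul_le_mul_of_nonneg_left hle hka.le) hx
  have hmeasG : Measurable fun l : ℝ => volume {y | kb * l < (G y).toReal} := by
    apply Antitone.measurable
    intro t₁ t₂ hle
    exact measure_mono fun y hy => lt_of_le_of_lt (mul_le_mul_of_nonneg_left hle hkb.le) hy
  -- main integral comparison
  have main : ENNReal.ofReal (1-s) * IF + ENNReal.ofReal s * IG ≤ IH := by
    rw [hIF, hIG, splitIoi _ hmeasF vanF, splitIoi _ hmeasG vanG]
    calc (ENNReal.ofReal (1-s) * ∫⁻ l in Ioo (0:ℝ) 1, volume {x | ka * l < (F x).toReal})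
          + ENNReal.ofReal s * ∫⁻ l in Ioo (0:ℝ) 1, volume {y | kb * l < (G y).toReal}
        = ∫⁻ l in Ioo (0:ℝ) 1, (ENNReal.ofReal (1-s) * volume {x | ka * l < (F x).toReal}
            + ENNReal.ofReal s * volume {y | kb * l < (G y).toReal}) := by
          rw [lintegral_add_left (by exact Measurable.const_mul hmeasF _),
            lintegral_const_mul _ hmeasF, lintegral_const_mul _ hmeasG]
      _ ≤ ∫⁻ l in Ioo (0:ℝ) 1, volume {z | kc * l < (h z).toReal} := by
          apply setLIntegral_mono
          · apply Antitone.measurable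
            intro t₁ t₂ hle
            exact measure_mono fun z hz => lt_of_le_of_lt (mul_le_mul_of_nonneg_left hle hkc.le) hz
          · exact claim
      _ ≤ IH := by rw [hIH]; exact lintegral_mono_set Ioo_subset_Ioi_self
  -- put everything together
  have hintF : ∫⁻ x, F x = a * IF := by
    rw [repF, hka_def, ENNReal.ofReal_toReal haT]
  have hintG : ∫⁻ y, G y = b * IG := by
    rw [repG, hkb_def, ENNReal.ofReal_toReal hbT]
  have hinth : ∫⁻ z, h z = c * IH := by
    rw [reph, hkc_def, ENNReal.ofReal_toReal hcT]
  calc (∫⁻ x, F x) ^ (1-s) * (∫⁻ y, G y) ^ s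
      = c * (IF ^ (1-s) * IG ^ s) := by
        rw [hintF, hintG, ENNReal.mul_rpow_of_nonneg _ _ h1s.le,
          ENNReal.mul_rpow_of_nonneg _ _ hs0.le, hc_def]
        ring
    _ ≤ c * (ENNReal.ofReal (1-s) * IF + ENNReal.ofReal s * IG) := by
        exact mul_le_mul_right (ennreal_geom_mean h1s hs0 (by ring) IF IG) c
    _ ≤ c * IH := mul_le_mul_right main c
    _ = ∫⁻ z, h z := hinth.symm
    _ ≤ ∫⁻ z, H z := lintegral_mono fun z => min_le_left _ _
/-- rpow commutes with monotone countable suprema. -/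
lemma rpow_iSup_mono {u : ℕ → ℝ≥0∞} (hu : Monotone u) {p : ℝ} (hp : 0 ≤ p) :
    (⨆ n, u n) ^ p = ⨆ n, (u n) ^ p := by
  have h1 : Tendsto u atTop (nhds (⨆ n, u n)) := tendsto_atTop_iSup hu
  have h2 : Tendsto (fun n => (u n) ^ p) atTop (nhds ((⨆ n, u n) ^ p)) :=
    (ENNReal.continuous_rpow_const.tendsto _).comp h1
  have h3 : Tendsto (fun n => (u n) ^ p) atTop (nhds (⨆ n, (u n) ^ p)) :=
    tendsto_atTop_iSup fun i j hij => ENNReal.rpow_le_rpow (hu hij) hp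
  exact tendsto_nhds_unique h2 h3

lemma iSup_min_nat (x : ℝ≥0∞) : (⨆ n : ℕ, min x (n : ℝ≥0∞)) = x := by
  apply le_antisymm (iSup_le fun n => min_le_left _ _)
  rcases eq_or_ne x ⊤ with rfl | hx
  · have : ∀ n : ℕ, (n : ℝ≥0∞) ≤ ⨆ n : ℕ, min ⊤ (n : ℝ≥0∞) := fun n => by
      simpa using le_iSup (fun n : ℕ => min ⊤ (n : ℝ≥0∞)) n
    have h2 : (⊤ : ℝ≥0∞) ≤ ⨆ n : ℕ, min ⊤ (n : ℝ≥0∞) := by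
      by_contra hlt
      push_neg at hlt
      obtain ⟨n, hn⟩ := ENNReal.exists_nat_gt hlt.ne
      exact absurd (this n) (not_le.2 hn)
    exact h2
  · obtain ⟨n, hn⟩ := ENNReal.exists_nat_gt hx
    calc x = min x (n : ℝ≥0∞) := (min_eq_left hn.le).symm
      _ ≤ _ := le_iSup (fun n : ℕ => min x (n : ℝ≥0∞)) n

/-- 1-D Prékopa–Leindler. -/
lemma pl_one {s : ℝ} (hs0 : 0 < s) (hs1 : s < 1) (F G H : ℝ → ℝ≥0∞)
    (hF : Measurable F) (hG : Measurable G) (hH : Measurable H)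
    (hyp : ∀ x y, F x ^ (1-s) * G y ^ s ≤ H ((1-s) * x + s * y)) :
    (∫⁻ x, F x) ^ (1-s) * (∫⁻ y, G y) ^ s ≤ ∫⁻ z, H z := by
  have h1s : 0 < 1 - s := by linarith
  set Fn := fun (n : ℕ) (x : ℝ) => min (F x) (n : ℝ≥0∞) with hFn
  set Gn := fun (n : ℕ) (y : ℝ) => min (G y) (n : ℝ≥0∞) with hGn
  have hFnm : ∀ n, Measurable (Fn n) := fun n => hF.min measurable_const
  have hGnm : ∀ n, Measurable (Gn n) := fun n => hG.min measurable_const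
  have hFnmono : Monotone Fn := fun i j hij x =>
    min_le_min le_rfl (by exact_mod_cast Nat.cast_le.2 hij)
  have hGnmono : Monotone Gn := fun i j hij y =>
    min_le_min le_rfl (by exact_mod_cast Nat.cast_le.2 hij)
  have hFsup : ∫⁻ x, F x = ⨆ n, ∫⁻ x, Fn n x := by
    rw [← lintegral_iSup hFnm hFnmono]
    congr 1; ext x; exact (iSup_min_nat (F x)).symm
  have hGsup : ∫⁻ y, G y = ⨆ n, ∫⁻ y, Gn n y := by
    rw [← lintegral_iSup hGnm hGnmono]
    congr 1; ext y; exact (iSup_min_nat (G y)).symm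
  have key : ∀ n m : ℕ, (∫⁻ x, Fn n x) ^ (1-s) * (∫⁻ y, Gn m y) ^ s ≤ ∫⁻ z, H z := by
    intro n m
    set k := max n m with hk
    have h1 : (∫⁻ x, Fn n x) ≤ ∫⁻ x, Fn k x := lintegral_mono fun x => hFnmono (le_max_left n m) x
    have h2 : (∫⁻ y, Gn m y) ≤ ∫⁻ y, Gn k y := lintegral_mono fun y => hGnmono (le_max_right n m) y
    calc (∫⁻ x, Fn n x) ^ (1-s) * (∫⁻ y, Gn m y) ^ s
        ≤ (∫⁻ x, Fn k x) ^ (1-s) * (∫⁻ y, Gn k y) ^ s :=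
          mul_le_mul' (ENNReal.rpow_le_rpow h1 h1s.le) (ENNReal.rpow_le_rpow h2 hs0.le)
      _ ≤ ∫⁻ z, H z := by
          apply pl_one_bounded hs0 hs1 (Fn k) (Gn k) H (hFnm k) (hGnm k) hH
            (k : ℝ≥0∞) (k : ℝ≥0∞) (ENNReal.natCast_ne_top k) (ENNReal.natCast_ne_top k)
            (fun x => min_le_right _ _) (fun y => min_le_right _ _)
          intro x y
          calc Fn k x ^ (1-s) * Gn k y ^ s ≤ F x ^ (1-s) * G y ^ s :=
              mul_le_mul' (ENNReal.rpow_le_rpow (min_le_left _ _) h1s.le)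
                (ENNReal.rpow_le_rpow (min_le_left _ _) hs0.le)
            _ ≤ H ((1-s) * x + s * y) := hyp x y
  rw [hFsup, hGsup, rpow_iSup_mono (fun i j hij => lintegral_mono fun x => hFnmono hij x) h1s.le,
    rpow_iSup_mono (fun i j hij => lintegral_mono fun y => hGnmono hij y) hs0.le,
    ENNReal.iSup_mul]
  refine iSup_le fun n => ?_
  rw [ENNReal.mul_iSup]
  exact iSup_le fun m => key n m
/-- Prékopa–Leindler on `Fin n → ℝ`. -/
lemma pl_pi : ∀ (n : ℕ) {s : ℝ}, 0 < s → s < 1 →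
    ∀ (F G H : (Fin n → ℝ) → ℝ≥0∞), Measurable F → Measurable G → Measurable H →
    (∀ x y, F x ^ (1-s) * G y ^ s ≤ H ((1-s) • x + s • y)) →
    (∫⁻ x, F x) ^ (1-s) * (∫⁻ y, G y) ^ s ≤ ∫⁻ z, H z := by
  intro n
  induction n with
  | zero =>
    intro s hs0 hs1 F G H hF hG hH hyp
    have hvol : (volume : Measure (Fin 0 → ℝ)) univ = 1 := by
      simp [volume_pi, Measure.pi_univ]
    have key : ∀ d : Fin 0 → ℝ, F d ^ (1-s) * G d ^ s ≤ H d := by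
      intro d
      calc F d ^ (1-s) * G d ^ s ≤ H ((1-s) • d + s • d) := hyp d d
        _ = H d := congrArg H (Subsingleton.elim _ _)
    rw [lintegral_unique F, lintegral_unique G, lintegral_unique H, hvol,
      mul_one, mul_one, mul_one]
    exact key _
  | succ n ih =>
    intro s hs0 hs1 F G H hF hG hH hyp
    set e := MeasurableEquiv.piFinSuccAbove (fun _ : Fin (n+1) => ℝ) 0 with he
    have mp : MeasurePreserving (⇑e) volume ((volume : Measure ℝ).prod (volume : Measure (Fin n → ℝ))) := by
      have := measurePreserving_piFinSuccAbove (fun _ : Fin (n+1) => (volume : Measure ℝ)) 0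
      exact this
    -- linearity of e.symm
    have esymm_lin : ∀ (a b : ℝ) (p q : ℝ × (Fin n → ℝ)),
        e.symm (a • p + b • q) = a • e.symm p + b • e.symm q := by
      intro a b p q
      apply e.injective
      rw [e.apply_symm_apply]
      have happ : ∀ z : Fin (n+1) → ℝ, e z = (z 0, fun j => z (Fin.succAbove 0 j)) := by
        intro z; rfl
      rw [happ]
      rw [show (a • e.symm p + b • e.symm q : Fin (n+1) → ℝ) 0
            = a * (e.symm p 0) + b * (e.symm q 0) by simp]
      have h0p : e.symm p 0 = p.1 := congrArg Prod.fst (e.apply_symm_apply p)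
      have h0q : e.symm q 0 = q.1 := congrArg Prod.fst (e.apply_symm_apply q)
      have hjp : ∀ j, e.symm p (Fin.succAbove 0 j) = p.2 j := fun j =>
        congrFun (congrArg Prod.snd (e.apply_symm_apply p)) j
      have hjq : ∀ j, e.symm q (Fin.succAbove 0 j) = q.2 j := fun j =>
        congrFun (congrArg Prod.snd (e.apply_symm_apply q)) j
      have h0 : (a • e.symm p + b • e.symm q) 0 = (a • p + b • q).1 := by
        simp [h0p, h0q]
      have h2 : (fun j => (a • e.symm p + b • e.symm q) (Fin.succAbove 0 j)) = (a • p + b • q).2 := by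
        funext j
        simp only [Pi.add_apply, Pi.smul_apply, smul_eq_mul, hjp j, hjq j]
        simp
      exact Prod.ext h0 h2
    set F' := fun z : ℝ × (Fin n → ℝ) => F (e.symm z) with hF'
    set G' := fun z : ℝ × (Fin n → ℝ) => G (e.symm z) with hG'
    set H' := fun z : ℝ × (Fin n → ℝ) => H (e.symm z) with hH'
    have hF'm : Measurable F' := hF.comp e.symm.measurable
    have hG'm : Measurable G' := hG.comp e.symm.measurable
    have hH'm : Measurable H' := hH.comp e.symm.measurable
    have intF : ∫⁻ x, F x = ∫⁻ z, F' z ∂((volume : Measure ℝ).prod volume) := by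
      rw [← mp.lintegral_comp hF'm]
      congr 1; ext x; rw [hF']; simp
    have intG : ∫⁻ y, G y = ∫⁻ z, G' z ∂((volume : Measure ℝ).prod volume) := by
      rw [← mp.lintegral_comp hG'm]
      congr 1; ext y; rw [hG']; simp
    have intH : ∫⁻ z, H z = ∫⁻ z, H' z ∂((volume : Measure ℝ).prod volume) := by
      rw [← mp.lintegral_comp hH'm]
      congr 1; ext z; rw [hH']; simp
    -- marginals
    set Ft := fun w : Fin n → ℝ => ∫⁻ t : ℝ, F' (t, w) with hFt
    set Gt := fun w : Fin n → ℝ => ∫⁻ t : ℝ, G' (t, w) with hGt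
    set Ht := fun w : Fin n → ℝ => ∫⁻ t : ℝ, H' (t, w) with hHt
    have hFtm : Measurable Ft := Measurable.lintegral_prod_left hF'm
    have hGtm : Measurable Gt := Measurable.lintegral_prod_left hG'm
    have hHtm : Measurable Ht := Measurable.lintegral_prod_left hH'm
    have margF : ∫⁻ z, F' z ∂((volume : Measure ℝ).prod volume) = ∫⁻ w, Ft w := by
      rw [lintegral_prod_symm _ hF'm.aemeasurable]
    have margG : ∫⁻ z, G' z ∂((volume : Measure ℝ).prod volume) = ∫⁻ w, Gt w := by
      rw [lintegral_prod_symm _ hG'm.aemeasurable]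
    have margH : ∫⁻ z, H' z ∂((volume : Measure ℝ).prod volume) = ∫⁻ w, Ht w := by
      rw [lintegral_prod_symm _ hH'm.aemeasurable]
    have hypt : ∀ w₁ w₂, Ft w₁ ^ (1-s) * Gt w₂ ^ s ≤ Ht ((1-s) • w₁ + s • w₂) := by
      intro w₁ w₂
      apply pl_one hs0 hs1 (fun t => F' (t, w₁)) (fun r => G' (r, w₂))
        (fun c => H' (c, (1-s) • w₁ + s • w₂))
        (hF'm.comp (measurable_id.prodMk measurable_const))
        (hG'm.comp (measurable_id.prodMk measurable_const))
        (hH'm.comp (measurable_id.prodMk measurable_const))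
      intro t r
      show F (e.symm (t, w₁)) ^ (1-s) * G (e.symm (r, w₂)) ^ s
          ≤ H (e.symm ((1-s) * t + s * r, (1-s) • w₁ + s • w₂))
      have heq : ((1-s) * t + s * r, (1-s) • w₁ + s • w₂)
          = (1-s) • ((t, w₁) : ℝ × (Fin n → ℝ)) + s • ((r, w₂) : ℝ × (Fin n → ℝ)) := by
        simp [Prod.ext_iff, smul_eq_mul]
      rw [heq, esymm_lin]
      exact hyp _ _
    calc (∫⁻ x, F x) ^ (1-s) * (∫⁻ y, G y) ^ s
        = (∫⁻ w, Ft w) ^ (1-s) * (∫⁻ w, Gt w) ^ s := by rw [intF, margF, intG, margG]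
      _ ≤ ∫⁻ w, Ht w := ih hs0 hs1 Ft Gt Ht hFtm hGtm hHtm hypt
      _ = ∫⁻ z, H z := by rw [intH, margH]
lemma expNeg_bot : expNeg ⊥ = ⊤ := by simp [expNeg]
lemma expNeg_top : expNeg ⊤ = 0 := by simp [expNeg]
lemma expNeg_coe (r : ℝ) : expNeg (r : EReal) = ENNReal.ofReal (Real.exp (-r)) := by
  simp [expNeg]

lemma ereal_cases (a : EReal) : a = ⊥ ∨ a = ⊤ ∨ ∃ r : ℝ, a = (r : EReal) := by
  induction a using EReal.rec with
  | bot => exact Or.inl rfl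
  | top => exact Or.inr (Or.inl rfl)
  | coe r => exact Or.inr (Or.inr ⟨r, rfl⟩)

lemma measurable_expNeg : Measurable expNeg := by
  unfold expNeg
  have hbot : MeasurableSet {t : EReal | t = ⊥} := by
    have : {t : EReal | t = ⊥} = {⊥} := by ext; simp
    rw [this]; exact measurableSet_singleton _
  have htop : MeasurableSet {t : EReal | t = ⊤} := by
    have : {t : EReal | t = ⊤} = {⊤} := by ext; simp
    rw [this]; exact measurableSet_singleton _
  apply Measurable.ite (p := fun t : EReal => t = ⊥) hbot measurable_const
  apply Measurable.ite (p := fun t : EReal => t = ⊤) htop measurable_const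
  exact (measurable_ereal_toReal.neg.exp).ennreal_ofReal

lemma expNeg_antitone : Antitone expNeg := by
  intro a b hab
  induction a using EReal.rec with
  | bot => rw [expNeg_bot]; exact le_top
  | top =>
    rw [top_le_iff.1 hab, expNeg_top]
  | coe r =>
    induction b using EReal.rec with
    | bot => exact absurd hab (by simp)
    | top => rw [expNeg_top]; exact zero_le
    | coe q =>
      rw [expNeg_coe, expNeg_coe]
      apply ENNReal.ofReal_le_ofReal
      exact Real.exp_le_exp.2 (by have := EReal.coe_le_coe_iff.1 hab; linarith)

lemma ofReal_exp_interp {t : ℝ} (ht0 : 0 < t) (ht1 : t < 1) {u v r : ℝ}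
    (h : r ≤ (1-t)*u + t*v) :
    ENNReal.ofReal (Real.exp (-u)) ^ (1-t) * ENNReal.ofReal (Real.exp (-v)) ^ t
      ≤ ENNReal.ofReal (Real.exp (-r)) := by
  rw [ENNReal.ofReal_rpow_of_pos (Real.exp_pos _), ENNReal.ofReal_rpow_of_pos (Real.exp_pos _),
    ← ENNReal.ofReal_mul (by positivity)]
  apply ENNReal.ofReal_le_ofReal
  rw [← Real.exp_mul, ← Real.exp_mul, ← Real.exp_add]
  exact Real.exp_le_exp.2 (by nlinarith)

/-- Key pointwise inequality for `expNeg` along convex combinations. -/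
lemma expNeg_interp {t : ℝ} (ht0 : 0 < t) (ht1 : t < 1) (a b c : EReal)
    (h : c ≤ ((1 - t : ℝ) : EReal) * a + ((t : ℝ) : EReal) * b) :
    expNeg a ^ (1-t) * expNeg b ^ t ≤ expNeg c := by
  have h1t : (0:ℝ) < 1 - t := by linarith
  induction a using EReal.rec with
  | bot =>
    have hb : ((1 - t : ℝ) : EReal) * (⊥ : EReal) = ⊥ :=
      EReal.mul_bot_of_pos (by exact_mod_cast h1t)
    rw [hb, EReal.bot_add] at h
    rw [le_bot_iff.1 h, expNeg_bot]
    exact le_top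
  | top =>
    rw [expNeg_top, ENNReal.zero_rpow_of_pos h1t, zero_mul]
    exact zero_le
  | coe u =>
    induction b using EReal.rec with
    | bot =>
      have hb : ((t : ℝ) : EReal) * (⊥ : EReal) = ⊥ :=
        EReal.mul_bot_of_pos (by exact_mod_cast ht0)
      rw [hb, EReal.add_bot] at h
      rw [le_bot_iff.1 h, expNeg_bot]
      exact le_top
    | top =>
      rw [expNeg_top, ENNReal.zero_rpow_of_pos ht0, mul_zero]
      exact zero_le
    | coe v =>
      -- both real
      have hsum : ((1 - t : ℝ) : EReal) * (u : EReal) + ((t : ℝ) : EReal) * (v : EReal)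
          = (((1-t) * u + t * v : ℝ) : EReal) := by
        rw [← EReal.coe_mul, ← EReal.coe_mul, ← EReal.coe_add]
      rw [hsum] at h
      calc expNeg (u : EReal) ^ (1-t) * expNeg (v : EReal) ^ t
          ≤ expNeg (((1-t) * u + t * v : ℝ) : EReal) := by
            rw [expNeg_coe, expNeg_coe, expNeg_coe]
            exact ofReal_exp_interp ht0 ht1 le_rfl
        _ ≤ expNeg c := expNeg_antitone h

/-- The Legendre transform is measurable (it is lower semicontinuous). -/
lemma measurable_legendre {n : ℕ} (f : En n → EReal) : Measurable (legendre f) := by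
  apply LowerSemicontinuous.measurable
  apply lowerSemicontinuous_iSup
  intro x
  have hcont : Continuous fun y : En n => ((inner ℝ x y : ℝ) : EReal) :=
    continuous_coe_real_ereal.comp (Continuous.inner continuous_const continuous_id)
  rcases ereal_cases (f x) with hfx | hfx | ⟨r, hfx⟩
  · have : (fun y : En n => ((inner ℝ x y : ℝ) : EReal) - f x)
        = fun y : En n => (⊤ : EReal) := by
      funext y; rw [hfx, EReal.sub_bot (EReal.coe_ne_bot _)]
    rw [this]
    exact lowerSemicontinuous_const
  · have : (fun y : En n => ((inner ℝ x y : ℝ) : EReal) - f x)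
        = fun y : En n => (⊥ : EReal) := by
      funext y; rw [hfx, EReal.sub_top]
    rw [this]
    exact lowerSemicontinuous_const
  · have : (fun y : En n => ((inner ℝ x y : ℝ) : EReal) - f x)
        = fun y : En n => (((inner ℝ x y : ℝ) - r : ℝ) : EReal) := by
      funext y; rw [hfx, EReal.coe_sub]
    rw [this]
    exact (continuous_coe_real_ereal.comp
      ((Continuous.inner continuous_const continuous_id).sub continuous_const)).lowerSemicontinuous

/-- Convexity inequality for the Legendre transform of a convex combination. -/
lemma legendre_interp {n : ℕ} {t : ℝ} (ht0 : 0 < t) (ht1 : t < 1)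
    (f₀ f₁ : En n → EReal) (hb₀ : ∀ x, f₀ x ≠ ⊥) (hb₁ : ∀ x, f₁ x ≠ ⊥)
    (y₀ y₁ : En n) :
    legendre (fun x => ((1 - t : ℝ) : EReal) * f₀ x + ((t : ℝ) : EReal) * f₁ x)
        ((1 - t) • y₀ + t • y₁)
      ≤ ((1 - t : ℝ) : EReal) * legendre f₀ y₀ + ((t : ℝ) : EReal) * legendre f₁ y₁ := by
  have h1t : (0:ℝ) < 1 - t := by linarith
  apply iSup_le
  intro x
  have hinner : (inner ℝ x ((1 - t) • y₀ + t • y₁) : ℝ)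
      = (1 - t) * (inner ℝ x y₀ : ℝ) + t * (inner ℝ x y₁ : ℝ) := by
    rw [inner_add_right, real_inner_smul_right, real_inner_smul_right]
  set r₀ := (inner ℝ x y₀ : ℝ) with hr₀
  set r₁ := (inner ℝ x y₁ : ℝ) with hr₁
  have hT₀ : ((r₀ : ℝ) : EReal) - f₀ x ≤ legendre f₀ y₀ :=
    le_iSup (fun x => ((inner ℝ x y₀ : ℝ) : EReal) - f₀ x) x
  have hT₁ : ((r₁ : ℝ) : EReal) - f₁ x ≤ legendre f₁ y₁ :=
    le_iSup (fun x => ((inner ℝ x y₁ : ℝ) : EReal) - f₁ x) x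
  have key : ((inner ℝ x ((1 - t) • y₀ + t • y₁) : ℝ) : EReal)
      - (((1 - t : ℝ) : EReal) * f₀ x + ((t : ℝ) : EReal) * f₁ x)
      ≤ ((1 - t : ℝ) : EReal) * (((r₀ : ℝ) : EReal) - f₀ x)
        + ((t : ℝ) : EReal) * (((r₁ : ℝ) : EReal) - f₁ x) := by
    rcases eq_or_ne (f₀ x) ⊤ with h₀ | h₀
    · have hg : ((1 - t : ℝ) : EReal) * f₀ x + ((t : ℝ) : EReal) * f₁ x = ⊤ := by
        rw [h₀, EReal.mul_top_of_pos (by exact_mod_cast h1t)]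
        apply EReal.top_add_of_ne_bot
        intro hc
        rcases ereal_cases (f₁ x) with hfx | hfx | ⟨q, hfx⟩
        · exact hb₁ x hfx
        · rw [hfx, EReal.mul_top_of_pos (show (0:EReal) < ((t:ℝ):EReal) by exact_mod_cast ht0)] at hc
          simp at hc
        · rw [hfx, ← EReal.coe_mul] at hc; exact EReal.coe_ne_bot _ hc
      rw [hg, EReal.sub_top]
      exact bot_le
    rcases eq_or_ne (f₁ x) ⊤ with h₁ | h₁
    · have hg : ((1 - t : ℝ) : EReal) * f₀ x + ((t : ℝ) : EReal) * f₁ x = ⊤ := by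
        rw [h₁, EReal.mul_top_of_pos (by exact_mod_cast ht0), add_comm]
        apply EReal.top_add_of_ne_bot
        intro hc
        rcases ereal_cases (f₀ x) with hfx | hfx | ⟨q, hfx⟩
        · exact hb₀ x hfx
        · rw [hfx, EReal.mul_top_of_pos (show (0:EReal) < ((1-t:ℝ):EReal) by exact_mod_cast h1t)] at hc
          simp at hc
        · rw [hfx, ← EReal.coe_mul] at hc; exact EReal.coe_ne_bot _ hc
      rw [hg, EReal.sub_top]
      exact bot_le
    · -- both real
      obtain ⟨u, hu⟩ : ∃ u : ℝ, f₀ x = (u : EReal) := by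
        rcases ereal_cases (f₀ x) with hfx | hfx | ⟨q, hfx⟩
        · exact absurd hfx (hb₀ x)
        · exact absurd hfx h₀
        · exact ⟨q, hfx⟩
      obtain ⟨v, hv⟩ : ∃ v : ℝ, f₁ x = (v : EReal) := by
        rcases ereal_cases (f₁ x) with hfx | hfx | ⟨q, hfx⟩
        · exact absurd hfx (hb₁ x)
        · exact absurd hfx h₁
        · exact ⟨q, hfx⟩
      rw [hu, hv, hinner,
        show ((1-t:ℝ):EReal) * (u:EReal) = (((1-t)*u : ℝ) : EReal) from (EReal.coe_mul _ _).symm,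
        show ((t:ℝ):EReal) * (v:EReal) = ((t*v : ℝ) : EReal) from (EReal.coe_mul _ _).symm,
        show ((r₀:ℝ):EReal) - (u:EReal) = ((r₀ - u:ℝ):EReal) from (EReal.coe_sub _ _).symm,
        show ((r₁:ℝ):EReal) - (v:EReal) = ((r₁ - v:ℝ):EReal) from (EReal.coe_sub _ _).symm,
        show ((1-t:ℝ):EReal) * ((r₀ - u:ℝ):EReal) = (((1-t)*(r₀-u):ℝ):EReal) from (EReal.coe_mul _ _).symm,
        show ((t:ℝ):EReal) * ((r₁ - v:ℝ):EReal) = ((t*(r₁-v):ℝ):EReal) from (EReal.coe_mul _ _).symm,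
        ← EReal.coe_add, ← EReal.coe_add, ← EReal.coe_sub, EReal.coe_le_coe_iff]
      exact le_of_eq (by ring)
  calc ((inner ℝ x ((1 - t) • y₀ + t • y₁) : ℝ) : EReal)
      - (((1 - t : ℝ) : EReal) * f₀ x + ((t : ℝ) : EReal) * f₁ x) ≤ _ := key
    _ ≤ ((1 - t : ℝ) : EReal) * legendre f₀ y₀ + ((t : ℝ) : EReal) * legendre f₁ y₁ := by
      apply add_le_add
      · exact mul_le_mul_of_nonneg_left hT₀ (by exact_mod_cast h1t.le)
      · exact mul_le_mul_of_nonneg_left hT₁ (by exact_mod_cast ht0.le)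
/-- Prékopa–Leindler on `En n`. -/
lemma pl_euclidean (n : ℕ) {s : ℝ} (hs0 : 0 < s) (hs1 : s < 1)
    (F G H : En n → ℝ≥0∞) (hF : Measurable F) (hG : Measurable G) (hH : Measurable H)
    (hyp : ∀ x y, F x ^ (1-s) * G y ^ s ≤ H ((1-s) • x + s • y)) :
    (∫⁻ x, F x) ^ (1-s) * (∫⁻ y, G y) ^ s ≤ ∫⁻ z, H z := by
  set e := (MeasurableEquiv.toLp 2 (Fin n → ℝ)).symm with he
  have mp : MeasurePreserving (⇑e.symm) (volume : Measure (Fin n → ℝ)) volume :=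
    (EuclideanSpace.volume_preserving_symm_measurableEquiv_toLp (Fin n)).symm
  have intF : ∫⁻ x, F x = ∫⁻ p, F (e.symm p) := (mp.lintegral_comp hF).symm
  have intG : ∫⁻ y, G y = ∫⁻ p, G (e.symm p) := (mp.lintegral_comp hG).symm
  have intH : ∫⁻ z, H z = ∫⁻ p, H (e.symm p) := (mp.lintegral_comp hH).symm
  rw [intF, intG, intH]
  apply pl_pi n hs0 hs1 _ _ _ (hF.comp e.symm.measurable) (hG.comp e.symm.measurable)
    (hH.comp e.symm.measurable)
  intro p q
  show F (e.symm p) ^ (1-s) * G (e.symm q) ^ s ≤ H (e.symm ((1-s) • p + s • q))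
  have hlin : e.symm ((1-s) • p + s • q) = (1-s) • e.symm p + s • e.symm q := rfl
  rw [hlin]
  exact hyp _ _

/-- Measurable log-concave pointwise version of the density `expNeg ∘ W`. -/
lemma density_lemma {n : ℕ} (W : En n → EReal) (hWconv : ConvexE W) (hWbot : ∀ x, W x ≠ ⊥) :
    ∃ g' : En n → ℝ≥0∞, Measurable g' ∧ (g' =ᵐ[(volume : Measure (En n))] fun x => expNeg (W x)) ∧
      ∀ t : ℝ, 0 < t → t < 1 → ∀ y₀ y₁ : En n,
        g' y₀ ^ (1-t) * g' y₁ ^ t ≤ g' ((1-t) • y₀ + t • y₁) := by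
  classical
  set D := {x : En n | W x ≠ ⊤} with hDdef
  have hWrealD : ∀ x ∈ D, W x = (((W x).toReal : ℝ) : EReal) := by
    intro x hx
    exact (EReal.coe_toReal hx (hWbot x)).symm
  have hD : Convex ℝ D := by
    intro x hx y hy a b ha hb hab
    have hb' : b = 1 - a := by linarith
    subst hb'
    have key := hWconv x y a ha (by linarith)
    show W (a • x + (1-a) • y) ≠ ⊤
    intro htop
    rw [htop] at key
    rw [hWrealD x hx, hWrealD y hy, ← EReal.coe_mul, ← EReal.coe_mul, ← EReal.coe_add] at key
    exact (EReal.coe_ne_top _) (top_le_iff.1 key)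
  set U := interior D with hUdef
  set wfun := fun x : En n => (W x).toReal with hwdef
  have hWrealU : ∀ x ∈ U, W x = ((wfun x : ℝ) : EReal) := fun x hx =>
    hWrealD x (interior_subset hx)
  have hconvexOn : ConvexOn ℝ U wfun := by
    refine ⟨hD.interior, ?_⟩
    intro x hx y hy a b ha hb hab
    have hb' : b = 1 - a := by linarith
    subst hb'
    have key := hWconv x y a ha (by linarith)
    have hz : (a • x + (1-a) • y) ∈ D := hD (interior_subset hx) (interior_subset hy) ha hb hab
    rw [hWrealD x (interior_subset hx), hWrealD y (interior_subset hy), ← EReal.coe_mul,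
      ← EReal.coe_mul, ← EReal.coe_add] at key
    have h2 := EReal.toReal_le_toReal key (hWbot _) (EReal.coe_ne_top _)
    simpa only [EReal.toReal_coe, smul_eq_mul] using h2
  have hcont : ContinuousOn wfun U := hconvexOn.continuousOn isOpen_interior
  set φ := fun x : En n => ENNReal.ofReal (Real.exp (-wfun x)) with hφdef
  have hlsc : LowerSemicontinuous (U.indicator φ) := by
    intro x c hc
    by_cases hx : x ∈ U
    · rw [indicator_of_mem hx φ] at hc
      have hwx : ContinuousAt wfun x := hcont.continuousAt (isOpen_interior.mem_nhds hx)
      have hφx : ContinuousAt φ x :=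
        ENNReal.continuous_ofReal.continuousAt.comp
          ((Real.continuous_exp.continuousAt).comp hwx.neg)
      have h1 : {y | φ y ∈ Ioi c} ∈ nhds x :=
        hφx.preimage_mem_nhds (isOpen_Ioi.mem_nhds hc)
      filter_upwards [h1, isOpen_interior.mem_nhds hx] with y hy1 hy2
      rw [indicator_of_mem hy2 φ]
      exact hy1
    · rw [indicator_of_notMem hx] at hc
      exact absurd hc (by simp)
  have g'meas : Measurable (U.indicator φ) := hlsc.measurable
  have hfr : volume (frontier D) = 0 := hD.addHaar_frontier volume
  have hae : (U.indicator φ) =ᵐ[(volume : Measure (En n))] fun x => expNeg (W x) := by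
    have hsub : {x | (U.indicator φ) x ≠ expNeg (W x)} ⊆ frontier D := by
      intro x hx
      by_contra hfx
      apply hx
      have hxcases : x ∈ U ∨ x ∉ closure D := by
        by_cases hU : x ∈ U
        · exact Or.inl hU
        by_cases hcl : x ∈ closure D
        · exact absurd ⟨hcl, hU⟩ hfx
        · exact Or.inr hcl
      rcases hxcases with hU | hcl
      · rw [indicator_of_mem hU φ, hWrealU x hU, expNeg_coe]
      · have hxD : x ∉ D := fun h => hcl (subset_closure h)
        have hW : W x = ⊤ := by
          by_contra h; exact hxD h
        have hxU : x ∉ U := fun h => hcl (subset_closure (interior_subset h))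
        rw [indicator_of_notMem hxU, hW]
        simp [expNeg]
    show (volume : Measure (En n)) {x | ¬ ((U.indicator φ) x = expNeg (W x))} = 0
    exact measure_mono_null hsub hfr
  refine ⟨U.indicator φ, g'meas, hae, ?_⟩
  intro t ht0 ht1 y₀ y₁
  have h1t : (0:ℝ) < 1 - t := by linarith
  by_cases hy₀ : y₀ ∈ U
  · by_cases hy₁ : y₁ ∈ U
    · have hz : ((1-t) • y₀ + t • y₁) ∈ U := hD.interior hy₀ hy₁ h1t.le ht0.le (by ring)
      have key := hWconv y₀ y₁ (1-t) h1t.le (by linarith)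
      rw [sub_sub_cancel] at key
      rw [hWrealU y₀ hy₀, hWrealU y₁ hy₁, ← EReal.coe_mul, ← EReal.coe_mul,
        ← EReal.coe_add] at key
      have hr : wfun ((1-t) • y₀ + t • y₁) ≤ (1-t) * wfun y₀ + t * wfun y₁ := by
        have h2 := EReal.toReal_le_toReal key (hWbot _) (EReal.coe_ne_top _)
        simpa only [EReal.toReal_coe] using h2
      rw [indicator_of_mem hy₀ φ, indicator_of_mem hy₁ φ, indicator_of_mem hz φ]
      exact ofReal_exp_interp ht0 ht1 hr
    · rw [indicator_of_notMem hy₁ φ, ENNReal.zero_rpow_of_pos ht0, mul_zero]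
      exact zero_le
  · rw [indicator_of_notMem hy₀ φ, ENNReal.zero_rpow_of_pos h1t, zero_mul]
    exact zero_le


end PLproof

/-- If `m = e^{-W} dx` is a log-concave measure, then for any measurable
`f₀, f₁ : ℝⁿ → ℝ ∪ {+∞}` and `t ∈ [0,1]`,
`∫ e^{-((1-t)f₀ + t f₁)*} dm ≥ (∫ e^{-f₀*} dm)^{1-t} (∫ e^{-f₁*} dm)^t`. -/
theorem statement3 (n : ℕ) (W : En n → EReal) (hWconv : ConvexE W) (hWbot : ∀ x, W x ≠ ⊥)
    (m : Measure (En n)) (hm : m = volume.withDensity fun x => expNeg (W x))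
    (f₀ f₁ : En n → EReal) (hf₀ : Measurable f₀) (hf₁ : Measurable f₁)
    (hb₀ : ∀ x, f₀ x ≠ ⊥) (hb₁ : ∀ x, f₁ x ≠ ⊥)
    (t : ℝ) (ht0 : 0 ≤ t) (ht1 : t ≤ 1) :
    intExpNeg m (legendre f₀) ^ (1 - t) * intExpNeg m (legendre f₁) ^ t
      ≤ intExpNeg m (legendre fun x => ((1 - t : ℝ) : EReal) * f₀ x + (t : EReal) * f₁ x) := by
  rcases eq_or_lt_of_le ht0 with h0 | h0
  · -- t = 0
    subst h0
    have hfun : (fun x => ((1 - (0:ℝ) : ℝ) : EReal) * f₀ x + ((0:ℝ) : EReal) * f₁ x) = f₀ := by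
      funext x
      norm_num
    rw [hfun]
    norm_num
  rcases eq_or_lt_of_le ht1 with h1 | h1
  · -- t = 1
    subst h1
    have hfun : (fun x => ((1 - (1:ℝ) : ℝ) : EReal) * f₀ x + ((1:ℝ) : EReal) * f₁ x) = f₁ := by
      funext x
      norm_num
    rw [hfun]
    norm_num
  -- main case
  obtain ⟨g', g'meas, hae, hlc⟩ := density_lemma W hWconv hWbot
  set F := fun y => g' y * expNeg (legendre f₀ y) with hF
  set G := fun y => g' y * expNeg (legendre f₁ y) with hG
  set Hh := fun y => g' y *
    expNeg (legendre (fun x => ((1 - t : ℝ) : EReal) * f₀ x + ((t:ℝ) : EReal) * f₁ x) y) with hHh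
  have hFm : Measurable F := g'meas.mul (measurable_expNeg.comp (measurable_legendre f₀))
  have hGm : Measurable G := g'meas.mul (measurable_expNeg.comp (measurable_legendre f₁))
  have hHm : Measurable Hh := g'meas.mul (measurable_expNeg.comp (measurable_legendre _))
  have hyp : ∀ y₀ y₁, F y₀ ^ (1-t) * G y₁ ^ t ≤ Hh ((1-t) • y₀ + t • y₁) := by
    intro y₀ y₁
    show (g' y₀ * expNeg (legendre f₀ y₀)) ^ (1-t) * (g' y₁ * expNeg (legendre f₁ y₁)) ^ t
      ≤ g' ((1-t) • y₀ + t • y₁) *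
        expNeg (legendre (fun x => ((1 - t : ℝ) : EReal) * f₀ x + ((t:ℝ) : EReal) * f₁ x)
          ((1-t) • y₀ + t • y₁))
    rw [ENNReal.mul_rpow_of_nonneg _ _ (by linarith), ENNReal.mul_rpow_of_nonneg _ _ ht0,
      mul_mul_mul_comm]
    apply mul_le_mul'
    · exact hlc t h0 h1 y₀ y₁
    · exact expNeg_interp h0 h1 _ _ _ (legendre_interp h0 h1 f₀ f₁ hb₀ hb₁ y₀ y₁)
  have PL := pl_euclidean n h0 h1 F G Hh hFm hGm hHm hyp
  have haem : AEMeasurable (fun x => expNeg (W x)) (volume : Measure (En n)) :=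
    g'meas.aemeasurable.congr hae
  have rewr : ∀ (ψ : En n → EReal), Measurable ψ →
      intExpNeg m ψ = ∫⁻ y, g' y * expNeg (ψ y) := by
    intro ψ hψ
    rw [intExpNeg, hm, lintegral_withDensity_eq_lintegral_mul₀ haem
      (show AEMeasurable (fun x => expNeg (ψ x)) volume from
        (measurable_expNeg.comp hψ).aemeasurable)]
    apply lintegral_congr_ae
    filter_upwards [hae] with y hy
    simp only [Pi.mul_apply]
    rw [hy]
  rw [rewr _ (measurable_legendre f₀), rewr _ (measurable_legendre f₁),
    rewr _ (measurable_legendre _)]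
  exact PL

end
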